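/- Let R_{ijkl} be an algebraic curvature tensor on ℝ^{n+1} such that R_{ijkl} = 0 whenever at least one of the indices i,j,k,l equals n+1, and let R'_{ijkl} (1 ≤ i,j,k,l ≤ n) denote its restriction, which is an algebraic curvature tensor on ℝ^n. Then for every 0 ≤ ν ≤ n+1 the subspaces Λ^ν(ℝ^n) and Λ^{ν−1}(ℝ^n)∧e_{n+1} of Λ^ν(ℝ^{n+1}) are invariant under A_ν(R), the restriction of A_ν(R) to the first summand equals A_ν(R'), the restriction to the second summand is conjugate to A_{ν−1}(R'), and consequently Tr(A_ν(R)²) = Tr(A_ν(R')²) + Tr(A_{ν−1}(R')²). -/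
import Mathlib


open ExteriorAlgebra

set_option synthInstance.maxHeartbeats 1000000
set_option maxHeartbeats 1000000

/-- The wedge `e_{ι 0} ∧ ⋯ ∧ e_{ι (ν-1)}` of standard basis vectors of `ℝ^n`,
as an element of the `ν`-th exterior power `⋀[ℝ]^ν (ℝ^n)`. -/
noncomputable def stdWedge (n ν : ℕ) (ι : Fin ν → Fin n) : ⋀[ℝ]^ν (Fin n → ℝ) :=
  ⟨ExteriorAlgebra.ιMulti ℝ ν (fun a => Pi.single (ι a) (1 : ℝ)),
   ExteriorAlgebra.ιMulti_range ℝ ν ⟨_, rfl⟩⟩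

/-- The Ricci tensor `Ric_{ij} = ∑_p R_{ipjp}` of an algebraic curvature tensor. -/
def ricci (n : ℕ) (R : Fin n → Fin n → Fin n → Fin n → ℝ) (i j : Fin n) : ℝ :=
  ∑ p : Fin n, R i p j p

/-- The value prescribed for the endomorphism `A_ν` (formula (7.2) of the paper) on
the basis wedge `e_{ι 0} ∧ ⋯ ∧ e_{ι (ν-1)}`. -/
noncomputable def AnuVal (n ν : ℕ) (R : Fin n → Fin n → Fin n → Fin n → ℝ)
    (ι : Fin ν → Fin n) : ⋀[ℝ]^ν (Fin n → ℝ) :=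
  (∑ a : Fin ν, ∑ p : Fin n,
      ricci n R (ι a) p • stdWedge n ν (Function.update ι a p)) -
    (2 : ℝ) • ∑ a : Fin ν, ∑ b : Fin ν,
      if a < b then
        ∑ p : Fin n, ∑ q : Fin n,
          R (ι a) p (ι b) q •
            stdWedge n ν (Function.update (Function.update ι a p) b q)
      else 0

/-- The inclusion `ℝ^n → ℝ^{n+1}` (extension by zero in the last coordinate). -/
def incl (n : ℕ) : (Fin n → ℝ) →ₗ[ℝ] (Fin (n + 1) → ℝ) where
  toFun w i := if h : (i : ℕ) < n then w ⟨i, h⟩ else 0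
  map_add' w w' := by funext i; by_cases h : (i : ℕ) < n <;> simp [h]
  map_smul' c w := by funext i; by_cases h : (i : ℕ) < n <;> simp [h]

/-- The subspace `Λ^ν(ℝ^n)` of `Λ^ν(ℝ^{n+1})` (image under the map of exterior algebras
induced by the inclusion `ℝ^n → ℝ^{n+1}`), as a submodule of the exterior algebra. -/
noncomputable def firstSummand (n ν : ℕ) : Submodule ℝ (ExteriorAlgebra ℝ (Fin (n + 1) → ℝ)) :=
  Submodule.map (ExteriorAlgebra.map (incl n)).toLinearMap (⋀[ℝ]^ν (Fin n → ℝ))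

/-- The subspace `Λ^{ν-1}(ℝ^n) ∧ e_{n+1}` of `Λ^ν(ℝ^{n+1})`, as a submodule of the
exterior algebra. -/
noncomputable def secondSummand (n ν : ℕ) : Submodule ℝ (ExteriorAlgebra ℝ (Fin (n + 1) → ℝ)) :=
  Submodule.map
    (LinearMap.mulRight ℝ (ExteriorAlgebra.ι ℝ (Pi.single (Fin.last n) (1 : ℝ))))
    (Submodule.map (ExteriorAlgebra.map (incl n)).toLinearMap (⋀[ℝ]^(ν - 1) (Fin n → ℝ)))


section Helpers

def projn (n : ℕ) : (Fin (n + 1) → ℝ) →ₗ[ℝ] (Fin n → ℝ) where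
  toFun w i := w i.castSucc
  map_add' w w' := rfl
  map_smul' c w := rfl

lemma projn_incl (n : ℕ) : (projn n).comp (incl n) = LinearMap.id := by
  ext w i
  simp [projn, incl, i.isLt]

lemma incl_single (n : ℕ) (i : Fin n) :
    incl n (Pi.single i (1:ℝ)) = Pi.single i.castSucc (1:ℝ) := by
  funext j
  induction j using Fin.lastCases with
  | last => simp [incl, Pi.single_eq_of_ne (Fin.castSucc_lt_last i).ne']
  | cast j =>
    by_cases h : j = i
    · subst h; simp [incl, j.isLt]
    · simp [incl, j.isLt, Pi.single_eq_of_ne (fun hc => h (Fin.castSucc_injective n hc)),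
        Pi.single_eq_of_ne h]

lemma flast_incl (n : ℕ) (w : Fin n → ℝ) :
    incl n w (Fin.last n) = 0 := by
  simp [incl]

lemma stdWedge_coe (n ν : ℕ) (ι : Fin ν → Fin n) :
    (stdWedge n ν ι : ExteriorAlgebra ℝ (Fin n → ℝ)) =
      ExteriorAlgebra.ιMulti ℝ ν (fun a => Pi.single (ι a) (1 : ℝ)) := rfl

lemma map_ιMulti {n m ν : ℕ} (f : (Fin n → ℝ) →ₗ[ℝ] (Fin m → ℝ)) (v : Fin ν → (Fin n → ℝ)) :
    ExteriorAlgebra.map f (ExteriorAlgebra.ιMulti ℝ ν v) = ExteriorAlgebra.ιMulti ℝ ν (f ∘ v) :=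
  ExteriorAlgebra.map_apply_ιMulti f v

lemma stdWedge_castSucc (n ν : ℕ) (ι : Fin ν → Fin n) :
    (stdWedge (n+1) ν (fun a => (ι a).castSucc) : ExteriorAlgebra ℝ (Fin (n+1) → ℝ)) =
      ExteriorAlgebra.map (incl n) (stdWedge n ν ι) := by
  rw [stdWedge_coe, stdWedge_coe, map_ιMulti]
  congr 1
  funext a
  simp [Function.comp, incl_single]

lemma ιMulti_succ (m ν : ℕ) (v : Fin (ν+1) → (Fin m → ℝ)) :
    ExteriorAlgebra.ιMulti ℝ (ν+1) v =
      ExteriorAlgebra.ιMulti ℝ ν (fun a => v a.castSucc) * ExteriorAlgebra.ι ℝ (v (Fin.last ν)) := by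
  rw [ExteriorAlgebra.ιMulti_apply, ExteriorAlgebra.ιMulti_apply, List.ofFn_succ', List.concat_eq_append,
    List.prod_append]
  simp

/-- extension of a tuple by the last index -/
def extTuple (n ν' : ℕ) (ι : Fin ν' → Fin n) : Fin (ν'+1) → Fin (n+1) :=
  fun a => if h : (a : ℕ) < ν' then (ι ⟨a, h⟩).castSucc else Fin.last n

lemma extTuple_castSucc (n ν' : ℕ) (ι : Fin ν' → Fin n) (a : Fin ν') :
    extTuple n ν' ι a.castSucc = (ι a).castSucc := by
  simp [extTuple, a.isLt]

lemma extTuple_last (n ν' : ℕ) (ι : Fin ν' → Fin n) :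
    extTuple n ν' ι (Fin.last ν') = Fin.last n := by
  simp [extTuple]

lemma stdWedge_ext (n ν' : ℕ) (ι : Fin ν' → Fin n) :
    (stdWedge (n+1) (ν'+1) (extTuple n ν' ι) : ExteriorAlgebra ℝ (Fin (n+1) → ℝ)) =
      ExteriorAlgebra.map (incl n) (stdWedge n ν' ι) *
        ExteriorAlgebra.ι ℝ (Pi.single (Fin.last n) (1:ℝ)) := by
  rw [stdWedge_coe, ιMulti_succ, stdWedge_coe, map_ιMulti]
  congr 1
  · congr 1
    funext a
    simp [Function.comp, extTuple_castSucc, incl_single]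
  · rw [extTuple_last]

end Helpers

section Maps

lemma map_mem_power {n m ν : ℕ} (f : (Fin n → ℝ) →ₗ[ℝ] (Fin m → ℝ))
    {x : ExteriorAlgebra ℝ (Fin n → ℝ)} (hx : x ∈ ⋀[ℝ]^ν (Fin n → ℝ)) :
    ExteriorAlgebra.map f x ∈ ⋀[ℝ]^ν (Fin m → ℝ) := by
  have h1 : Submodule.map (ExteriorAlgebra.map f).toLinearMap
      (LinearMap.range (ExteriorAlgebra.ι ℝ (M := Fin n → ℝ))) ≤
      LinearMap.range (ExteriorAlgebra.ι ℝ (M := Fin m → ℝ)) := by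
    rintro _ ⟨_, ⟨w, rfl⟩, rfl⟩
    exact ⟨f w, (ExteriorAlgebra.map_apply_ι f w).symm⟩
  have h2 : Submodule.map (ExteriorAlgebra.map f).toLinearMap (⋀[ℝ]^ν (Fin n → ℝ)) ≤
      ⋀[ℝ]^ν (Fin m → ℝ) := by
    rw [exteriorPower, Submodule.map_pow]
    exact pow_le_pow_left' h1 ν
  exact h2 ⟨x, hx, rfl⟩

lemma mul_eLast_mem_power {n ν' : ℕ} {x : ExteriorAlgebra ℝ (Fin (n+1) → ℝ)}
    (hx : x ∈ ⋀[ℝ]^ν' (Fin (n+1) → ℝ)) :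
    x * ExteriorAlgebra.ι ℝ (Pi.single (Fin.last n) (1:ℝ)) ∈ ⋀[ℝ]^(ν'+1) (Fin (n+1) → ℝ) := by
  rw [exteriorPower, pow_succ]
  exact Submodule.mul_mem_mul hx ⟨_, rfl⟩

/-- the embedding `⋀^ν(ℝ^n) → ⋀^ν(ℝ^{n+1})` -/
noncomputable def j1 (n ν : ℕ) : (⋀[ℝ]^ν (Fin n → ℝ)) →ₗ[ℝ] (⋀[ℝ]^ν (Fin (n+1) → ℝ)) :=
  LinearMap.codRestrict _
    ((ExteriorAlgebra.map (incl n)).toLinearMap.comp (Submodule.subtype _))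
    (fun x => map_mem_power (incl n) x.2)

@[simp] lemma j1_coe (n ν : ℕ) (x : ⋀[ℝ]^ν (Fin n → ℝ)) :
    (j1 n ν x : ExteriorAlgebra ℝ (Fin (n+1) → ℝ)) = ExteriorAlgebra.map (incl n) x := rfl

/-- the embedding `⋀^{ν'}(ℝ^n) → ⋀^{ν'+1}(ℝ^{n+1})`, `x ↦ x ∧ e_{n+1}` -/
noncomputable def j2 (n ν' : ℕ) : (⋀[ℝ]^ν' (Fin n → ℝ)) →ₗ[ℝ] (⋀[ℝ]^(ν'+1) (Fin (n+1) → ℝ)) :=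
  LinearMap.codRestrict _
    ((LinearMap.mulRight ℝ (ExteriorAlgebra.ι ℝ (Pi.single (Fin.last n) (1:ℝ)))).comp
      ((ExteriorAlgebra.map (incl n)).toLinearMap.comp (Submodule.subtype _)))
    (fun x => by exact mul_eLast_mem_power (map_mem_power (incl n) x.2))

@[simp] lemma j2_coe (n ν' : ℕ) (x : ⋀[ℝ]^ν' (Fin n → ℝ)) :
    (j2 n ν' x : ExteriorAlgebra ℝ (Fin (n+1) → ℝ)) =
      ExteriorAlgebra.map (incl n) x * ExteriorAlgebra.ι ℝ (Pi.single (Fin.last n) (1:ℝ)) := rfl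

lemma j1_stdWedge (n ν : ℕ) (ι : Fin ν → Fin n) :
    j1 n ν (stdWedge n ν ι) = stdWedge (n+1) ν (fun a => (ι a).castSucc) :=
  Subtype.ext (by rw [j1_coe, stdWedge_castSucc])

lemma j2_stdWedge (n ν' : ℕ) (ι : Fin ν' → Fin n) :
    j2 n ν' (stdWedge n ν' ι) = stdWedge (n+1) (ν'+1) (extTuple n ν' ι) :=
  Subtype.ext (by rw [j2_coe, stdWedge_ext])

end Maps

section Span

lemma span_single_wedges (m ν : ℕ) :
    Submodule.span ℝ
        (Set.range (fun ι : Fin ν → Fin m =>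
          ExteriorAlgebra.ιMulti ℝ ν (fun a => Pi.single (ι a) (1:ℝ)))) =
      ⋀[ℝ]^ν (Fin m → ℝ) := by
  refine le_antisymm (Submodule.span_le.2 ?_) ?_
  · rintro _ ⟨ι, rfl⟩
    exact ExteriorAlgebra.ιMulti_range ℝ ν ⟨_, rfl⟩
  · rw [← ExteriorAlgebra.ιMulti_span_fixedDegree]
    refine Submodule.span_le.2 ?_
    rintro _ ⟨v, rfl⟩
    have hv : v = fun a => ∑ i : Fin m, (v a i) • (Pi.single i (1:ℝ) : Fin m → ℝ) := by
      funext a j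
      simp [Pi.single_apply, Finset.sum_ite_eq', mul_comm]
    rw [hv]
    have := (ExteriorAlgebra.ιMulti ℝ ν (M := Fin m → ℝ)).toMultilinearMap.map_sum
      (α := fun _ => Fin m) (g := fun a i => (v a i) • (Pi.single i (1:ℝ) : Fin m → ℝ))
    simp only [AlternatingMap.coe_multilinearMap] at this
    rw [this]
    refine Submodule.sum_mem _ (fun r _ => ?_)
    have h2 := (ExteriorAlgebra.ιMulti ℝ ν (M := Fin m → ℝ)).toMultilinearMap.map_smul_univ
      (fun a => v a (r a)) (fun a => (Pi.single (r a) (1:ℝ) : Fin m → ℝ))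
    simp only [AlternatingMap.coe_multilinearMap] at h2
    rw [h2]
    exact Submodule.smul_mem _ _ (Submodule.subset_span ⟨r, rfl⟩)

lemma span_stdWedge (m ν : ℕ) :
    Submodule.span ℝ (Set.range (stdWedge m ν)) = ⊤ := by
  have hinj : Function.Injective ((⋀[ℝ]^ν (Fin m → ℝ)).subtype) := Subtype.coe_injective
  apply Submodule.map_injective_of_injective hinj
  rw [Submodule.map_span, Submodule.map_top, Submodule.range_subtype]
  have hset : ((⋀[ℝ]^ν (Fin m → ℝ)).subtype '' Set.range (stdWedge m ν)) =
      Set.range (fun ι : Fin ν → Fin m =>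
        ExteriorAlgebra.ιMulti ℝ ν (fun a => Pi.single (ι a) (1:ℝ))) := by
    ext x
    constructor
    · rintro ⟨_, ⟨ι, rfl⟩, rfl⟩; exact ⟨ι, rfl⟩
    · rintro ⟨ι, rfl⟩; exact ⟨stdWedge m ν ι, ⟨ι, rfl⟩, rfl⟩
  rw [hset, span_single_wedges]

instance expow_finite (m ν : ℕ) : Module.Finite ℝ (⋀[ℝ]^ν (Fin m → ℝ)) := by
  rw [Module.Finite.iff_fg]
  rw [Submodule.fg_def]
  exact ⟨_, Set.finite_range _, span_single_wedges m ν⟩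

end Span

section Contraction

/-- the coordinate functional `w ↦ w (last n)` -/
def flast (n : ℕ) : Module.Dual ℝ (Fin (n+1) → ℝ) := LinearMap.proj (Fin.last n)

/-- contraction with `flast` -/
noncomputable def Dlast (n : ℕ) :
    ExteriorAlgebra ℝ (Fin (n+1) → ℝ) →ₗ[ℝ] ExteriorAlgebra ℝ (Fin (n+1) → ℝ) :=
  CliffordAlgebra.contractLeft (flast n)

lemma Dlast_leibniz (n : ℕ) (y : ExteriorAlgebra ℝ (Fin n → ℝ)) :
    ∀ z : ExteriorAlgebra ℝ (Fin (n+1) → ℝ),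
      Dlast n (ExteriorAlgebra.map (incl n) y * z) =
        CliffordAlgebra.involute (ExteriorAlgebra.map (incl n) y) * Dlast n z := by
  induction y using CliffordAlgebra.induction with
  | algebraMap r =>
    intro z
    rw [AlgHom.commutes]
    rw [Algebra.smul_def (A := ExteriorAlgebra ℝ (Fin (n+1) → ℝ)) r z |>.symm]
    rw [map_smul, CliffordAlgebra.involute.commutes, Algebra.smul_def]
  | ι v =>
    intro z
    rw [ExteriorAlgebra.map_apply_ι]
    rw [show (Dlast n) (ExteriorAlgebra.ι ℝ (incl n v) * z)
        = flast n (incl n v) • z - ExteriorAlgebra.ι ℝ (incl n v) * Dlast n z from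
      CliffordAlgebra.contractLeft_ι_mul _ _ _]
    rw [show flast n (incl n v) = 0 from flast_incl n v, zero_smul, zero_sub,
      CliffordAlgebra.involute_ι, neg_mul]
  | mul a b ha hb =>
    intro z
    rw [show ExteriorAlgebra.map (incl n) (a * b)
        = ExteriorAlgebra.map (incl n) a * ExteriorAlgebra.map (incl n) b from map_mul _ a b,
      mul_assoc, ha, hb, map_mul, mul_assoc]
  | add a b ha hb =>
    intro z
    rw [map_add, add_mul, map_add, ha, hb, map_add, add_mul]

lemma Dlast_map_incl (n : ℕ) (y : ExteriorAlgebra ℝ (Fin n → ℝ)) :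
    Dlast n (ExteriorAlgebra.map (incl n) y) = 0 := by
  have := Dlast_leibniz n y 1
  rw [mul_one] at this
  rw [this, show Dlast n 1 = 0 from CliffordAlgebra.contractLeft_one _ _, mul_zero]

lemma Dlast_map_incl_mul_eLast (n : ℕ) (y : ExteriorAlgebra ℝ (Fin n → ℝ)) :
    Dlast n (ExteriorAlgebra.map (incl n) y * ExteriorAlgebra.ι ℝ (Pi.single (Fin.last n) (1:ℝ))) =
      CliffordAlgebra.involute (ExteriorAlgebra.map (incl n) y) := by
  rw [Dlast_leibniz]
  rw [show Dlast n (ExteriorAlgebra.ι ℝ (Pi.single (Fin.last n) (1:ℝ)))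
      = algebraMap ℝ _ (flast n (Pi.single (Fin.last n) (1:ℝ))) from
    CliffordAlgebra.contractLeft_ι _ _ _]
  simp [flast]

lemma map_incl_injective (n : ℕ) :
    Function.Injective (ExteriorAlgebra.map (incl n)) := by
  intro a b h
  have : ExteriorAlgebra.map (projn n) (ExteriorAlgebra.map (incl n) a)
      = ExteriorAlgebra.map (projn n) (ExteriorAlgebra.map (incl n) b) := by rw [h]
  rwa [← AlgHom.comp_apply, ← AlgHom.comp_apply, ExteriorAlgebra.map_comp_map,
    projn_incl, ExteriorAlgebra.map_id, AlgHom.id_apply, AlgHom.id_apply] at this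

lemma pieces_zero (n : ℕ) (y1 y2 : ExteriorAlgebra ℝ (Fin n → ℝ))
    (h : ExteriorAlgebra.map (incl n) y1 +
      ExteriorAlgebra.map (incl n) y2 * ExteriorAlgebra.ι ℝ (Pi.single (Fin.last n) (1:ℝ)) = 0) :
    y1 = 0 ∧ y2 = 0 := by
  have hD := congrArg (Dlast n) h
  rw [map_add, Dlast_map_incl, Dlast_map_incl_mul_eLast, zero_add, map_zero] at hD
  have h2 : ExteriorAlgebra.map (incl n) y2 = 0 := by
    have := congrArg (CliffordAlgebra.involute) hD
    rwa [CliffordAlgebra.involute_involute, map_zero] at this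
  have hy2 : y2 = 0 := map_incl_injective n (by rw [h2, map_zero])
  have h1 : ExteriorAlgebra.map (incl n) y1 = 0 := by
    rw [h2, zero_mul, add_zero] at h
    exact h
  exact ⟨map_incl_injective n (by rw [h1, map_zero]), hy2⟩

end Contraction

section Equiv

/-- the combined map `⋀^{ν'+1}(ℝ^n) × ⋀^{ν'}(ℝ^n) → ⋀^{ν'+1}(ℝ^{n+1})` -/
noncomputable def bigMap (n ν' : ℕ) :
    ((⋀[ℝ]^(ν'+1) (Fin n → ℝ)) × (⋀[ℝ]^ν' (Fin n → ℝ))) →ₗ[ℝ] (⋀[ℝ]^(ν'+1) (Fin (n+1) → ℝ)) :=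
  (j1 n (ν'+1)).coprod (j2 n ν')

lemma bigMap_injective (n ν' : ℕ) : Function.Injective (bigMap n ν') := by
  rw [← LinearMap.ker_eq_bot, LinearMap.ker_eq_bot']
  rintro ⟨y1, y2⟩ h
  have hco : (ExteriorAlgebra.map (incl n)) (y1 : ExteriorAlgebra ℝ (Fin n → ℝ)) +
      (ExteriorAlgebra.map (incl n)) (y2 : ExteriorAlgebra ℝ (Fin n → ℝ)) *
        ExteriorAlgebra.ι ℝ (Pi.single (Fin.last n) (1:ℝ)) = 0 := by
    have := congrArg (Subtype.val) h
    simpa [bigMap, LinearMap.coprod_apply] using this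
  obtain ⟨h1, h2⟩ := pieces_zero n _ _ hco
  ext
  · exact h1
  · exact h2

lemma stdWedge_mem_range_bigMap (n ν' : ℕ) (ι : Fin (ν'+1) → Fin (n+1)) :
    stdWedge (n+1) (ν'+1) ι ∈ LinearMap.range (bigMap n ν') := by
  by_cases hex : ∃ a, ι a = Fin.last n
  · obtain ⟨a0, ha0⟩ := hex
    by_cases h2 : ∃ b, b ≠ a0 ∧ ι b = Fin.last n
    · -- two equal entries, wedge is zero
      obtain ⟨b, hb, hbl⟩ := h2
      have hz : stdWedge (n+1) (ν'+1) ι = 0 := by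
        apply Subtype.ext
        rw [stdWedge_coe]
        exact AlternatingMap.map_eq_zero_of_eq
          (ExteriorAlgebra.ιMulti ℝ (ν'+1) (M := Fin (n+1) → ℝ))
          (fun a => Pi.single (ι a) (1:ℝ))
          (i := a0) (j := b) (by simp only [ha0, hbl]) (Ne.symm hb)
      rw [hz]
      exact Submodule.zero_mem _
    · push_neg at h2
      -- ι hits last exactly at a0; swap a0 to the end
      set σ := Equiv.swap a0 (Fin.last ν') with hσ
      set κ := ι ∘ σ with hκ
      have hκlast : κ (Fin.last ν') = Fin.last n := by
        simp only [hκ, Function.comp, hσ, Equiv.swap_apply_right]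
        exact ha0
      have hκcast : ∀ a : Fin ν', κ a.castSucc ≠ Fin.last n := by
        intro a
        have hne : a.castSucc ≠ Fin.last ν' := (Fin.castSucc_lt_last a).ne
        by_cases hc : a.castSucc = a0
        · have hlne : Fin.last ν' ≠ a0 := fun hh => hne (hc.trans hh.symm)
          simp only [hκ, Function.comp, hσ, hc, Equiv.swap_apply_left]
          exact h2 (Fin.last ν') hlne
        · simp only [hκ, Function.comp, hσ, Equiv.swap_apply_of_ne_of_ne hc hne]
          exact h2 a.castSucc hc
      -- κ = extTuple of its restriction
      set ι'' := fun a : Fin ν' => (κ a.castSucc).castPred (hκcast a) with hι''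
      have hκext : κ = extTuple n ν' ι'' := by
        funext b
        induction b using Fin.lastCases with
        | last => rw [hκlast, extTuple_last]
        | cast a =>
          rw [extTuple_castSucc, hι'']
          simp [Fin.castSucc_castPred]
      have hmemκ : stdWedge (n+1) (ν'+1) κ ∈ LinearMap.range (bigMap n ν') := by
        rw [hκext, ← j2_stdWedge]
        exact ⟨(0, stdWedge n ν' ι''), by simp [bigMap, LinearMap.coprod_apply]⟩
      have hperm :
          (stdWedge (n+1) (ν'+1) κ : ExteriorAlgebra ℝ (Fin (n+1) → ℝ)) =
            Equiv.Perm.sign σ • (stdWedge (n+1) (ν'+1) ι : ExteriorAlgebra ℝ (Fin (n+1) → ℝ)) := by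
        rw [stdWedge_coe, stdWedge_coe]
        have h := AlternatingMap.map_perm (ExteriorAlgebra.ιMulti ℝ (ν'+1)
          (M := Fin (n+1) → ℝ)) (fun a => Pi.single (ι a) (1:ℝ)) σ
        rw [show (fun a => Pi.single (κ a) (1:ℝ)) =
          (fun a => Pi.single (ι a) (1:ℝ)) ∘ σ from rfl]
        exact h
      rcases Int.units_eq_one_or (Equiv.Perm.sign σ) with hs | hs
      · have heq : stdWedge (n+1) (ν'+1) ι = stdWedge (n+1) (ν'+1) κ := by
          apply Subtype.ext
          rw [hperm, hs, one_smul]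
        rw [heq]; exact hmemκ
      · have heq : stdWedge (n+1) (ν'+1) ι = -stdWedge (n+1) (ν'+1) κ := by
          apply Subtype.ext
          rw [Submodule.coe_neg, hperm, hs]
          simp
        rw [heq]
        exact Submodule.neg_mem _ hmemκ
  · push_neg at hex
    set ι' := fun a => (ι a).castPred (hex a) with hι'
    have hfun : ι = fun a => (ι' a).castSucc := by
      funext a
      simp [hι', Fin.castSucc_castPred]
    have : stdWedge (n+1) (ν'+1) ι = j1 n (ν'+1) (stdWedge n (ν'+1) ι') := by
      rw [j1_stdWedge, ← hfun]
    rw [this]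
    exact ⟨(stdWedge n (ν'+1) ι', 0), by simp [bigMap, LinearMap.coprod_apply]⟩

lemma bigMap_surjective (n ν' : ℕ) : Function.Surjective (bigMap n ν') := by
  rw [← LinearMap.range_eq_top]
  rw [← top_le_iff, ← span_stdWedge (n+1) (ν'+1), Submodule.span_le]
  rintro _ ⟨ι, rfl⟩
  exact stdWedge_mem_range_bigMap n ν' ι

/-- the linear equivalence `⋀^{ν'+1}(ℝ^n) × ⋀^{ν'}(ℝ^n) ≃ ⋀^{ν'+1}(ℝ^{n+1})` -/
noncomputable def bigEquiv (n ν' : ℕ) :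
    ((⋀[ℝ]^(ν'+1) (Fin n → ℝ)) × (⋀[ℝ]^ν' (Fin n → ℝ))) ≃ₗ[ℝ] (⋀[ℝ]^(ν'+1) (Fin (n+1) → ℝ)) :=
  LinearEquiv.ofBijective (bigMap n ν') ⟨bigMap_injective n ν', bigMap_surjective n ν'⟩

end Equiv

section Ricci

variable {n : ℕ} {R : Fin (n + 1) → Fin (n + 1) → Fin (n + 1) → Fin (n + 1) → ℝ}
variable (hvanish : ∀ i j k l,
      (i = Fin.last n ∨ j = Fin.last n ∨ k = Fin.last n ∨ l = Fin.last n) →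
        R i j k l = 0)

include hvanish

lemma ricci_castSucc (i j : Fin n) :
    ricci (n+1) R i.castSucc j.castSucc =
      ricci n (fun i j k l => R i.castSucc j.castSucc k.castSucc l.castSucc) i j := by
  unfold ricci
  rw [Fin.sum_univ_castSucc]
  rw [hvanish _ _ _ _ (Or.inr (Or.inl rfl)), add_zero]

lemma ricci_fst_last (p : Fin (n+1)) : ricci (n+1) R (Fin.last n) p = 0 := by
  unfold ricci
  exact Finset.sum_eq_zero (fun q _ => hvanish _ _ _ _ (Or.inl rfl))

lemma ricci_snd_last (i : Fin (n+1)) : ricci (n+1) R i (Fin.last n) = 0 := by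
  unfold ricci
  exact Finset.sum_eq_zero (fun q _ => hvanish _ _ _ _ (Or.inr (Or.inr (Or.inl rfl))))

end Ricci

section Updates

lemma update_castSucc {n ν : ℕ} (ι : Fin ν → Fin n) (a : Fin ν) (p : Fin n) :
    Function.update (fun b => (ι b).castSucc) a p.castSucc =
      fun b => ((Function.update ι a p) b).castSucc := by
  funext b
  simp [Function.update_apply, apply_ite Fin.castSucc]

lemma update_ext_castSucc {n ν' : ℕ} (ι : Fin ν' → Fin n) (a : Fin ν') (p : Fin n) :
    Function.update (extTuple n ν' ι) a.castSucc p.castSucc =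
      extTuple n ν' (Function.update ι a p) := by
  funext b
  induction b using Fin.lastCases with
  | last =>
    rw [Function.update_of_ne (Fin.castSucc_lt_last a).ne', extTuple_last, extTuple_last]
  | cast c =>
    rw [extTuple_castSucc, Function.update_apply, Function.update_apply, extTuple_castSucc]
    simp [Fin.castSucc_inj, apply_ite Fin.castSucc]

end Updates

section AnuValLemmas

variable {n : ℕ} {R : Fin (n + 1) → Fin (n + 1) → Fin (n + 1) → Fin (n + 1) → ℝ}
variable (hvanish : ∀ i j k l,
      (i = Fin.last n ∨ j = Fin.last n ∨ k = Fin.last n ∨ l = Fin.last n) →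
        R i j k l = 0)

include hvanish

lemma AnuVal_castSucc {ν : ℕ} (ι : Fin ν → Fin n) :
    AnuVal (n+1) ν R (fun a => (ι a).castSucc) =
      j1 n ν (AnuVal n ν
        (fun i j k l => R i.castSucc j.castSucc k.castSucc l.castSucc) ι) := by
  unfold AnuVal
  rw [map_sub, map_smul]
  congr 1
  · rw [map_sum]
    refine Finset.sum_congr rfl (fun a _ => ?_)
    rw [map_sum, Fin.sum_univ_castSucc]
    have hz : ricci (n+1) R ((ι a).castSucc) (Fin.last n) = 0 := ricci_snd_last hvanish _
    simp only [hz, zero_smul, add_zero]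
    refine Finset.sum_congr rfl (fun p _ => ?_)
    rw [map_smul, j1_stdWedge]
    simp only [ricci_castSucc hvanish, update_castSucc]
  · congr 1
    rw [map_sum]
    refine Finset.sum_congr rfl (fun a _ => ?_)
    rw [map_sum]
    refine Finset.sum_congr rfl (fun b _ => ?_)
    by_cases hab : a < b
    · simp only [if_pos hab, map_sum]
      rw [Fin.sum_univ_castSucc]
      have hzp : ∀ q : Fin (n+1), R ((ι a).castSucc) (Fin.last n) ((ι b).castSucc) q = 0 :=
        fun q => hvanish _ _ _ _ (Or.inr (Or.inl rfl))
      simp only [hzp, zero_smul, Finset.sum_const_zero, add_zero]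
      refine Finset.sum_congr rfl (fun p _ => ?_)
      rw [Fin.sum_univ_castSucc]
      have hzq : R ((ι a).castSucc) p.castSucc ((ι b).castSucc) (Fin.last n) = 0 :=
        hvanish _ _ _ _ (Or.inr (Or.inr (Or.inr rfl)))
      simp only [hzq, zero_smul, add_zero]
      refine Finset.sum_congr rfl (fun q _ => ?_)
      rw [map_smul, j1_stdWedge]
      simp only [update_castSucc]
    · simp only [if_neg hab, map_zero]

lemma AnuVal_ext {ν' : ℕ} (ι : Fin ν' → Fin n) :
    AnuVal (n+1) (ν'+1) R (extTuple n ν' ι) =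
      j2 n ν' (AnuVal n ν'
        (fun i j k l => R i.castSucc j.castSucc k.castSucc l.castSucc) ι) := by
  unfold AnuVal
  rw [map_sub, map_smul]
  congr 1
  · rw [map_sum]
    conv_lhs => rw [Fin.sum_univ_castSucc]
    have hlast : ∑ p : Fin (n+1),
        ricci (n+1) R (extTuple n ν' ι (Fin.last ν')) p •
          stdWedge (n+1) (ν'+1) (Function.update (extTuple n ν' ι) (Fin.last ν') p) = 0 := by
      refine Finset.sum_eq_zero (fun p _ => ?_)
      rw [extTuple_last, ricci_fst_last hvanish, zero_smul]
    rw [hlast, add_zero]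
    refine Finset.sum_congr rfl (fun a _ => ?_)
    rw [map_sum]
    conv_lhs => rw [Fin.sum_univ_castSucc]
    have hz : ricci (n+1) R (extTuple n ν' ι a.castSucc) (Fin.last n) = 0 :=
      ricci_snd_last hvanish _
    rw [hz, zero_smul, add_zero]
    refine Finset.sum_congr rfl (fun p _ => ?_)
    rw [map_smul, j2_stdWedge]
    simp only [extTuple_castSucc, ricci_castSucc hvanish, update_ext_castSucc]
  · congr 1
    rw [map_sum]
    conv_lhs => rw [Fin.sum_univ_castSucc]
    have hlast : (∑ b : Fin (ν'+1),
        if Fin.last ν' < b then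
          ∑ p : Fin (n+1), ∑ q : Fin (n+1),
            R (extTuple n ν' ι (Fin.last ν')) p (extTuple n ν' ι b) q •
              stdWedge (n+1) (ν'+1)
                (Function.update (Function.update (extTuple n ν' ι) (Fin.last ν') p) b q)
        else 0) = 0 :=
      Finset.sum_eq_zero (fun b _ => if_neg (Fin.le_last b).not_gt)
    rw [hlast, add_zero]
    refine Finset.sum_congr rfl (fun a _ => ?_)
    rw [map_sum]
    conv_lhs => rw [Fin.sum_univ_castSucc]
    have hblast : (if a.castSucc < Fin.last ν' then
        ∑ p : Fin (n+1), ∑ q : Fin (n+1),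
          R (extTuple n ν' ι a.castSucc) p (extTuple n ν' ι (Fin.last ν')) q •
            stdWedge (n+1) (ν'+1)
              (Function.update (Function.update (extTuple n ν' ι) a.castSucc p) (Fin.last ν') q)
      else 0) = 0 := by
      rw [if_pos (Fin.castSucc_lt_last a)]
      refine Finset.sum_eq_zero (fun p _ => Finset.sum_eq_zero (fun q _ => ?_))
      rw [extTuple_last, hvanish _ _ _ _ (Or.inr (Or.inr (Or.inl rfl))), zero_smul]
    rw [hblast, add_zero]
    refine Finset.sum_congr rfl (fun b _ => ?_)
    simp only [Fin.castSucc_lt_castSucc_iff]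
    by_cases hab : a < b
    · rw [if_pos hab, if_pos hab]
      simp only [map_sum]
      conv_lhs => rw [Fin.sum_univ_castSucc]
      have hplast : ∑ q : Fin (n+1),
          R (extTuple n ν' ι a.castSucc) (Fin.last n) (extTuple n ν' ι b.castSucc) q •
            stdWedge (n+1) (ν'+1)
              (Function.update (Function.update (extTuple n ν' ι) a.castSucc (Fin.last n))
                b.castSucc q) = 0 :=
        Finset.sum_eq_zero (fun q _ => by
          rw [hvanish _ _ _ _ (Or.inr (Or.inl rfl)), zero_smul])
      rw [hplast, add_zero]
      refine Finset.sum_congr rfl (fun p _ => ?_)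
      rw [Fin.sum_univ_castSucc]
      have hqlast :
          R (extTuple n ν' ι a.castSucc) p.castSucc (extTuple n ν' ι b.castSucc) (Fin.last n) = 0 :=
        hvanish _ _ _ _ (Or.inr (Or.inr (Or.inr rfl)))
      rw [hqlast, zero_smul, add_zero]
      refine Finset.sum_congr rfl (fun q _ => ?_)
      rw [map_smul, j2_stdWedge]
      simp only [extTuple_castSucc, update_ext_castSucc]
    · rw [if_neg hab, if_neg hab, map_zero]

end AnuValLemmas

section Composition

lemma AnuVal_nu_zero (m : ℕ) (R : Fin m → Fin m → Fin m → Fin m → ℝ) (ι : Fin 0 → Fin m) :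
    AnuVal m 0 R ι = 0 := by
  simp [AnuVal]

lemma A_eq_zero_of_nu_zero (m : ℕ) (R : Fin m → Fin m → Fin m → Fin m → ℝ)
    (A : (⋀[ℝ]^0 (Fin m → ℝ)) →ₗ[ℝ] (⋀[ℝ]^0 (Fin m → ℝ)))
    (hA : ∀ ι : Fin 0 → Fin m, A (stdWedge m 0 ι) = AnuVal m 0 R ι) :
    A = 0 := by
  refine LinearMap.ext_on (span_stdWedge m 0) ?_
  rintro _ ⟨ι, rfl⟩
  rw [hA, AnuVal_nu_zero]
  rfl

variable {n ν : ℕ} {R : Fin (n + 1) → Fin (n + 1) → Fin (n + 1) → Fin (n + 1) → ℝ}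
variable (hvanish : ∀ i j k l,
      (i = Fin.last n ∨ j = Fin.last n ∨ k = Fin.last n ∨ l = Fin.last n) →
        R i j k l = 0)

include hvanish

lemma A_comp_j1
    (A : (⋀[ℝ]^ν (Fin (n+1) → ℝ)) →ₗ[ℝ] (⋀[ℝ]^ν (Fin (n+1) → ℝ)))
    (hA : ∀ ι : Fin ν → Fin (n + 1), A (stdWedge (n + 1) ν ι) = AnuVal (n + 1) ν R ι)
    (A' : (⋀[ℝ]^ν (Fin n → ℝ)) →ₗ[ℝ] (⋀[ℝ]^ν (Fin n → ℝ)))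
    (hA' : ∀ ι : Fin ν → Fin n,
      A' (stdWedge n ν ι) =
        AnuVal n ν (fun i j k l => R i.castSucc j.castSucc k.castSucc l.castSucc) ι) :
    A ∘ₗ j1 n ν = j1 n ν ∘ₗ A' := by
  refine LinearMap.ext_on (span_stdWedge n ν) ?_
  rintro _ ⟨ι, rfl⟩
  rw [LinearMap.comp_apply, LinearMap.comp_apply, j1_stdWedge, hA, hA',
    AnuVal_castSucc hvanish ι]

lemma A_comp_j2 {ν' : ℕ}
    (A : (⋀[ℝ]^(ν'+1) (Fin (n+1) → ℝ)) →ₗ[ℝ] (⋀[ℝ]^(ν'+1) (Fin (n+1) → ℝ)))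
    (hA : ∀ ι : Fin (ν'+1) → Fin (n + 1),
      A (stdWedge (n + 1) (ν'+1) ι) = AnuVal (n + 1) (ν'+1) R ι)
    (A'' : (⋀[ℝ]^ν' (Fin n → ℝ)) →ₗ[ℝ] (⋀[ℝ]^ν' (Fin n → ℝ)))
    (hA'' : ∀ ι : Fin ν' → Fin n,
      A'' (stdWedge n ν' ι) =
        AnuVal n ν' (fun i j k l => R i.castSucc j.castSucc k.castSucc l.castSucc) ι) :
    A ∘ₗ j2 n ν' = j2 n ν' ∘ₗ A'' := by
  refine LinearMap.ext_on (span_stdWedge n ν') ?_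
  rintro _ ⟨ι, rfl⟩
  rw [LinearMap.comp_apply, LinearMap.comp_apply, j2_stdWedge, hA, hA'',
    AnuVal_ext hvanish ι]

lemma A_conj {ν' : ℕ}
    (A : (⋀[ℝ]^(ν'+1) (Fin (n+1) → ℝ)) →ₗ[ℝ] (⋀[ℝ]^(ν'+1) (Fin (n+1) → ℝ)))
    (hA : ∀ ι : Fin (ν'+1) → Fin (n + 1),
      A (stdWedge (n + 1) (ν'+1) ι) = AnuVal (n + 1) (ν'+1) R ι)
    (A' : (⋀[ℝ]^(ν'+1) (Fin n → ℝ)) →ₗ[ℝ] (⋀[ℝ]^(ν'+1) (Fin n → ℝ)))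
    (hA' : ∀ ι : Fin (ν'+1) → Fin n,
      A' (stdWedge n (ν'+1) ι) =
        AnuVal n (ν'+1) (fun i j k l => R i.castSucc j.castSucc k.castSucc l.castSucc) ι)
    (A'' : (⋀[ℝ]^ν' (Fin n → ℝ)) →ₗ[ℝ] (⋀[ℝ]^ν' (Fin n → ℝ)))
    (hA'' : ∀ ι : Fin ν' → Fin n,
      A'' (stdWedge n ν' ι) =
        AnuVal n ν' (fun i j k l => R i.castSucc j.castSucc k.castSucc l.castSucc) ι) :
    (bigEquiv n ν').conj (A'.prodMap A'') = A := by
  have h1 := A_comp_j1 hvanish A hA A' hA'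
  have h2 := A_comp_j2 hvanish A hA A'' hA''
  have hpoint : ∀ y : (⋀[ℝ]^(ν'+1) (Fin n → ℝ)) × (⋀[ℝ]^ν' (Fin n → ℝ)),
      A (bigMap n ν' y) = bigMap n ν' ((A'.prodMap A'') y) := by
    rintro ⟨y1, y2⟩
    rw [bigMap, LinearMap.coprod_apply, map_add]
    rw [show A (j1 n (ν'+1) y1) = j1 n (ν'+1) (A' y1) from LinearMap.congr_fun h1 y1]
    rw [show A (j2 n ν' y2) = j2 n ν' (A'' y2) from LinearMap.congr_fun h2 y2]
    rfl
  apply LinearMap.ext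
  intro x
  obtain ⟨y, rfl⟩ := (bigEquiv n ν').surjective x
  rw [LinearEquiv.conj_apply, LinearMap.comp_apply, LinearMap.comp_apply]
  simp only [LinearEquiv.coe_coe, LinearEquiv.symm_apply_apply]
  have heq : ∀ z, (bigEquiv n ν') z = bigMap n ν' z :=
    fun z => LinearEquiv.ofBijective_apply _ _
  rw [heq, heq, hpoint]

lemma trace_split {ν' : ℕ}
    (A : (⋀[ℝ]^(ν'+1) (Fin (n+1) → ℝ)) →ₗ[ℝ] (⋀[ℝ]^(ν'+1) (Fin (n+1) → ℝ)))
    (hA : ∀ ι : Fin (ν'+1) → Fin (n + 1),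
      A (stdWedge (n + 1) (ν'+1) ι) = AnuVal (n + 1) (ν'+1) R ι)
    (A' : (⋀[ℝ]^(ν'+1) (Fin n → ℝ)) →ₗ[ℝ] (⋀[ℝ]^(ν'+1) (Fin n → ℝ)))
    (hA' : ∀ ι : Fin (ν'+1) → Fin n,
      A' (stdWedge n (ν'+1) ι) =
        AnuVal n (ν'+1) (fun i j k l => R i.castSucc j.castSucc k.castSucc l.castSucc) ι)
    (A'' : (⋀[ℝ]^ν' (Fin n → ℝ)) →ₗ[ℝ] (⋀[ℝ]^ν' (Fin n → ℝ)))
    (hA'' : ∀ ι : Fin ν' → Fin n,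
      A'' (stdWedge n ν' ι) =
        AnuVal n ν' (fun i j k l => R i.castSucc j.castSucc k.castSucc l.castSucc) ι) :
    LinearMap.trace ℝ _ (A ∘ₗ A) =
      LinearMap.trace ℝ _ (A' ∘ₗ A') + LinearMap.trace ℝ _ (A'' ∘ₗ A'') := by
  have hc := A_conj hvanish A hA A' hA' A'' hA''
  rw [← hc, ← LinearEquiv.conj_comp, LinearMap.trace_conj', LinearMap.prodMap_comp,
    LinearMap.trace_prodMap']

end Composition
/-- Pascal-recurrence decomposition (Section 6 of the paper): if the algebraic curvature
tensor `R` on `ℝ^{n+1}` vanishes whenever an index equals `n+1` and `R'` is its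
restriction to `ℝ^n`, then the subspaces `Λ^ν(ℝ^n)` and `Λ^{ν-1}(ℝ^n) ∧ e_{n+1}` of
`Λ^ν(ℝ^{n+1})` are invariant under `A_ν(R)`; the restriction of `A_ν(R)` to the first
summand is `A_ν(R')` (via the canonical embedding), the restriction to the second summand
is conjugate to `A_{ν-1}(R')` (via `x ↦ x ∧ e_{n+1}`), and
`Tr(A_ν(R)²) = Tr(A_ν(R')²) + Tr(A_{ν-1}(R')²)` (with `A_{-1} = 0` when `ν = 0`). -/
theorem trace_Anu_sq_product_decomposition (n ν : ℕ) (hn : 1 ≤ n) (hν : ν ≤ n + 1)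
    (R : Fin (n + 1) → Fin (n + 1) → Fin (n + 1) → Fin (n + 1) → ℝ)
    (hskew₁ : ∀ i j k l, R i j k l = - R j i k l)
    (hskew₂ : ∀ i j k l, R i j k l = - R i j l k)
    (hpair : ∀ i j k l, R i j k l = R k l i j)
    (hbianchi : ∀ i j k l, R i j k l + R i k l j + R i l j k = 0)
    (hvanish : ∀ i j k l,
      (i = Fin.last n ∨ j = Fin.last n ∨ k = Fin.last n ∨ l = Fin.last n) →
        R i j k l = 0)
    (A : ⋀[ℝ]^ν (Fin (n + 1) → ℝ) →ₗ[ℝ] ⋀[ℝ]^ν (Fin (n + 1) → ℝ))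
    (hA : ∀ ι : Fin ν → Fin (n + 1), A (stdWedge (n + 1) ν ι) = AnuVal (n + 1) ν R ι)
    (A' : ⋀[ℝ]^ν (Fin n → ℝ) →ₗ[ℝ] ⋀[ℝ]^ν (Fin n → ℝ))
    (hA' : ∀ ι : Fin ν → Fin n,
      A' (stdWedge n ν ι) =
        AnuVal n ν
          (fun i j k l => R i.castSucc j.castSucc k.castSucc l.castSucc) ι) :
    -- invariance of the first summand `Λ^ν(ℝ^n)`
    (∀ x : ⋀[ℝ]^ν (Fin (n + 1) → ℝ),
      (x : ExteriorAlgebra ℝ (Fin (n + 1) → ℝ)) ∈ firstSummand n ν →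
        ((A x : ExteriorAlgebra ℝ (Fin (n + 1) → ℝ)) ∈ firstSummand n ν)) ∧
    -- the restriction of `A_ν(R)` to the first summand is `A_ν(R')`
    (∀ ι : Fin ν → Fin n,
      (A (stdWedge (n + 1) ν (fun a => (ι a).castSucc)) :
          ExteriorAlgebra ℝ (Fin (n + 1) → ℝ)) =
        ExteriorAlgebra.map (incl n)
          (A' (stdWedge n ν ι) : ExteriorAlgebra ℝ (Fin n → ℝ))) ∧
    -- invariance of the second summand `Λ^{ν-1}(ℝ^n) ∧ e_{n+1}`
    (∀ x : ⋀[ℝ]^ν (Fin (n + 1) → ℝ),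
      (x : ExteriorAlgebra ℝ (Fin (n + 1) → ℝ)) ∈ secondSummand n ν →
        ((A x : ExteriorAlgebra ℝ (Fin (n + 1) → ℝ)) ∈ secondSummand n ν)) ∧
    -- for `ν = ν' + 1`: the restriction to the second summand is conjugate to
    -- `A_{ν-1}(R')` via `x ↦ x ∧ e_{n+1}`, and the trace identity holds
    (∀ ν' : ℕ, ν = ν' + 1 →
      ∀ A'' : ⋀[ℝ]^ν' (Fin n → ℝ) →ₗ[ℝ] ⋀[ℝ]^ν' (Fin n → ℝ),
        (∀ ι : Fin ν' → Fin n,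
          A'' (stdWedge n ν' ι) =
            AnuVal n ν'
              (fun i j k l => R i.castSucc j.castSucc k.castSucc l.castSucc) ι) →
        (∀ ι : Fin ν' → Fin n,
          (A (stdWedge (n + 1) ν
              (fun a => if h : (a : ℕ) < ν' then (ι ⟨a, h⟩).castSucc else Fin.last n)) :
              ExteriorAlgebra ℝ (Fin (n + 1) → ℝ)) =
            ExteriorAlgebra.map (incl n)
                (A'' (stdWedge n ν' ι) : ExteriorAlgebra ℝ (Fin n → ℝ)) *
              ExteriorAlgebra.ι ℝ (Pi.single (Fin.last n) (1 : ℝ))) ∧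
        LinearMap.trace ℝ _ (A ∘ₗ A) =
          LinearMap.trace ℝ _ (A' ∘ₗ A') + LinearMap.trace ℝ _ (A'' ∘ₗ A'')) ∧
    -- for `ν = 0` the second summand does not contribute (`A_{-1} = 0`)
    (ν = 0 → LinearMap.trace ℝ _ (A ∘ₗ A) = LinearMap.trace ℝ _ (A' ∘ₗ A')) := by

  refine ⟨?_, ?_, ?_, ?_, ?_⟩
  · -- invariance of the first summand
    intro x hx
    obtain ⟨y, hy, hxy⟩ := hx
    have hx_eq : x = j1 n ν ⟨y, hy⟩ := Subtype.ext (by rw [j1_coe]; exact hxy.symm)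
    rw [hx_eq, show A (j1 n ν ⟨y, hy⟩) = j1 n ν (A' ⟨y, hy⟩) from
      LinearMap.congr_fun (A_comp_j1 hvanish A hA A' hA') _]
    exact ⟨↑(A' ⟨y, hy⟩), (A' ⟨y, hy⟩).2, rfl⟩
  · -- restriction to the first summand
    intro ι
    rw [hA, AnuVal_castSucc hvanish ι, j1_coe, hA']
  · -- invariance of the second summand
    intro x hx
    obtain rfl | ⟨ν'', rfl⟩ : ν = 0 ∨ ∃ k, ν = k + 1 := by
      rcases ν with _ | k
      · exact Or.inl rfl
      · exact Or.inr ⟨k, rfl⟩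
    · have hA0 : A = 0 := A_eq_zero_of_nu_zero _ R A hA
      rw [hA0]
      simp only [LinearMap.zero_apply, ZeroMemClass.coe_zero]
      exact Submodule.zero_mem _
    · obtain ⟨w, hw, hxw⟩ := hx
      obtain ⟨y, hy, rfl⟩ := hw
      have hx_eq : x = j2 n ν'' ⟨y, hy⟩ := by
        apply Subtype.ext
        rw [j2_coe, ← hxw]
        rfl
      have hinv : ⊤ ≤ Submodule.comap
          ((Submodule.subtype _).comp (A.comp (j2 n ν'')))
          (secondSummand n (ν'' + 1)) := by
        rw [← span_stdWedge n ν'', Submodule.span_le]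
        rintro _ ⟨ι, rfl⟩
        show ((A (j2 n ν'' (stdWedge n ν'' ι))) :
          ExteriorAlgebra ℝ (Fin (n+1) → ℝ)) ∈ secondSummand n (ν'' + 1)
        rw [j2_stdWedge, hA, AnuVal_ext hvanish ι, j2_coe]
        refine ⟨ExteriorAlgebra.map (incl n)
          ↑(AnuVal n ν''
            (fun i j k l => R i.castSucc j.castSucc k.castSucc l.castSucc) ι), ?_, rfl⟩
        exact ⟨_, (AnuVal n ν''
          (fun i j k l => R i.castSucc j.castSucc k.castSucc l.castSucc) ι).2, rfl⟩
      rw [hx_eq]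
      exact hinv trivial
  · -- the conjugation statement and the trace identity
    intro ν' hν' A'' hA''
    subst hν'
    constructor
    · intro ι
      rw [show (fun a : Fin (ν'+1) => if h : (a : ℕ) < ν' then (ι ⟨a, h⟩).castSucc else Fin.last n) =
        extTuple n ν' ι from rfl]
      rw [hA, AnuVal_ext hvanish ι, j2_coe, hA'']
    · exact trace_split hvanish A hA A' hA' A'' hA''
  · -- the case ν = 0
    intro h0
    subst h0
    rw [A_eq_zero_of_nu_zero _ R A hA, A_eq_zero_of_nu_zero n _ A' hA']
    simp
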